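/- A simplicial map between Segal spaces is a right fibration if and only if it is cartesian on the single coface map d^0 : [0] → [1]; i.e., the square with horizontal maps d_0 : Y_1 → Y_0, d_0 : X_1 → X_0 being a pullback implies all squares over last-point-preserving maps are pullbacks. -/
import Mathlib


open CategoryTheory SimplexCategory Opposite

namespace Paper

/-- A monotone map in `Δ` is last-point-preserving. -/
def LastPreserving {a b : SimplexCategory} (f : a ⟶ b) : Prop :=
  f.toOrderHom (Fin.last a.len) = Fin.last b.len

/-- A monotone map in `Δ` is active (endpoint-preserving). -/
def Active {a b : SimplexCategory} (f : a ⟶ b) : Prop :=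
  f.toOrderHom 0 = 0 ∧ LastPreserving f

universe u

variable {X Y : SimplexCategoryᵒᵖ ⥤ Type u}

/-- A simplicial map `p : Y ⟶ X` is cartesian on a map `f` of `Δ` if the
corresponding naturality square is a pullback. -/
def IsCartesianOn (p : Y ⟶ X) {a b : SimplexCategory} (f : a ⟶ b) : Prop :=
  IsPullback (Y.map f.op) (p.app (op b)) (p.app (op a)) (X.map f.op)

/-- A simplicial map is a right fibration if it is cartesian on every
last-point-preserving map of `Δ`. -/
def IsRightFib (p : Y ⟶ X) : Prop :=
  ∀ {a b : SimplexCategory} (f : a ⟶ b), LastPreserving f → IsCartesianOn p f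

/-- A simplicial map is culf if it is cartesian on every active map of `Δ`. -/
def IsCulf (p : Y ⟶ X) : Prop :=
  ∀ {a b : SimplexCategory} (f : a ⟶ b), Active f → IsCartesianOn p f

/-- The Segal condition: for each `m`, the square expressing
`X_{m+2} ≃ X_{m+1} ×_{X_0} X_1` (restriction to the first `m+2` vertices,
the last edge, the last vertex and the initial vertex) is a pullback; this is
the iterated form of `X_n ≃ X_1 ×_{X_0} ⋯ ×_{X_0} X_1`. -/
def IsSegal (X : SimplexCategoryᵒᵖ ⥤ Type u) : Prop :=
  ∀ m : ℕ, IsPullback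
    (X.map (SimplexCategory.δ (Fin.last (m + 2))).op)
    (X.map (SimplexCategory.mkOfLe (n := m + 2) ⟨m + 1, by omega⟩ (Fin.last (m + 2))
      (Fin.le_last _)).op)
    (X.map (SimplexCategory.const (SimplexCategory.mk 0) (SimplexCategory.mk (m + 1))
      (Fin.last (m + 1))).op)
    (X.map (SimplexCategory.const (SimplexCategory.mk 0) (SimplexCategory.mk 1) 0).op)

/-- The map `[0] ⟶ [n]` picking the last vertex. -/
def eps (n : ℕ) : SimplexCategory.mk 0 ⟶ SimplexCategory.mk n :=
  SimplexCategory.const _ _ (Fin.last n)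

lemma eps_zero : eps 0 = 𝟙 (SimplexCategory.mk 0) := by
  apply SimplexCategory.Hom.ext
  ext x
  fin_cases x
  rfl

lemma eps_one : eps 1 = SimplexCategory.δ (0 : Fin 2) := by
  apply SimplexCategory.Hom.ext
  ext x
  fin_cases x
  rfl

lemma eps_succ_succ (m : ℕ) :
    eps (m + 2) = SimplexCategory.δ (0 : Fin 2) ≫
      SimplexCategory.mkOfLe (n := m + 2) ⟨m + 1, by omega⟩ (Fin.last (m + 2))
        (Fin.le_last _) := by
  apply SimplexCategory.Hom.ext
  ext x
  fin_cases x
  rfl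

lemma eps_comp {a b : SimplexCategory} (f : a ⟶ b) (hf : LastPreserving f) :
    eps a.len ≫ f = eps b.len := by
  apply SimplexCategory.Hom.ext
  ext x
  fin_cases x
  exact congrArg Fin.val hf

/-- Pasting of cartesian squares. -/
lemma IsCartesianOn.comp {p : Y ⟶ X} {a b c : SimplexCategory} {f : a ⟶ b} {g : b ⟶ c}
    (hg : IsCartesianOn p g) (hf : IsCartesianOn p f) : IsCartesianOn p (f ≫ g) := by
  have := IsPullback.paste_horiz hg hf
  simpa [IsCartesianOn] using this

/-- Cancellation of cartesian squares. -/
lemma IsCartesianOn.of_comp {p : Y ⟶ X} {a b c : SimplexCategory} {f : a ⟶ b} {g : b ⟶ c}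
    (hfg : IsCartesianOn p (f ≫ g)) (hf : IsCartesianOn p f) : IsCartesianOn p g := by
  refine IsPullback.of_right ?_ (p.naturality g.op) hf
  simpa [IsCartesianOn] using hfg

lemma cart_eps (p : Y ⟶ X) (hX : IsSegal X) (hY : IsSegal Y)
    (h1 : IsCartesianOn p (SimplexCategory.δ (0 : Fin 2))) :
    ∀ n : ℕ, IsCartesianOn p (eps n) := by
  intro n
  induction n with
  | zero =>
      rw [eps_zero]
      unfold IsCartesianOn
      simp only [op_id, CategoryTheory.Functor.map_id]
      exact IsPullback.of_horiz_isIso ⟨by simp⟩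
  | succ n ih =>
      match n, ih with
      | 0, _ =>
          rw [eps_one]; exact h1
      | Nat.succ m, ih =>
          -- `ih : IsCartesianOn p (eps (m + 1))`
          -- Step 1: `p` is cartesian on `mkOfLe (m+1) (last (m+2))`.
          have hmk : IsCartesianOn p
              (SimplexCategory.mkOfLe (n := m + 2) ⟨m + 1, by omega⟩ (Fin.last (m + 2))
                (Fin.le_last _)) := by
            have big := IsPullback.paste_horiz (hY m) ih.flip
            rw [p.naturality (SimplexCategory.δ (Fin.last (m + 2))).op,
                p.naturality (SimplexCategory.const (SimplexCategory.mk 0)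
                  (SimplexCategory.mk 1) 0).op] at big
            have := IsPullback.of_right big
              (p.naturality (SimplexCategory.mkOfLe (n := m + 2) ⟨m + 1, by omega⟩
                (Fin.last (m + 2)) (Fin.le_last _)).op).symm (hX m)
            exact this.flip
          rw [eps_succ_succ m]
          exact IsCartesianOn.comp hmk h1

theorem isRightFib_iff_of_segal (p : Y ⟶ X) (hX : IsSegal X) (hY : IsSegal Y) :
    IsRightFib p ↔ IsCartesianOn p (SimplexCategory.δ (0 : Fin 2)) := by
  constructor
  · intro h
    exact h _ rfl
  · intro h1 a b f hf
    have he := cart_eps p hX hY h1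
    have : IsCartesianOn p (eps a.len ≫ f) := by
      rw [eps_comp f hf]; exact he b.len
    exact IsCartesianOn.of_comp this (he a.len)

end Paper
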